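/- Let F be a field, L ≥ 3, V = ZMod L, and let G : Matrix V V F have G (u+1) u = g u ≠ 0 for all u ∈ V and all other entries zero, with φ = ∏_{u ∈ V} g u satisfying φ ≠ 1. Write T = (I − G)⁻¹. Then for any vertices represented by integers 1 ≤ k < i ≤ j ≤ L, the entries T k 1, T j i are nonzero and T j 1 · (T k 1)⁻¹ · T k i · (T j i)⁻¹ = φ. -/

import Mathlib

open Matrix Finset

theorem stmt_16 (F : Type*) [Field F] (L : ℕ) [NeZero L] (hL : 3 ≤ L)
    (g : ZMod L → F) (hg : ∀ u : ZMod L, g u ≠ 0)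
    (G : Matrix (ZMod L) (ZMod L) F)
    (hG : ∀ j i : ZMod L, G j i = if j = i + 1 then g i else 0)
    (φ : F) (hφdef : φ = ∏ u : ZMod L, g u) (hφ : φ ≠ 1)
    (T : Matrix (ZMod L) (ZMod L) F) (hT : T = (1 - G)⁻¹)
    (k i j : ℕ) (hk : 1 ≤ k) (hki : k < i) (hij : i ≤ j) (hjL : j ≤ L) :
    T (k : ZMod L) (1 : ZMod L) ≠ 0 ∧ T (j : ZMod L) (i : ZMod L) ≠ 0 ∧
      T (j : ZMod L) (1 : ZMod L) * (T (k : ZMod L) (1 : ZMod L))⁻¹ *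
        T (k : ZMod L) (i : ZMod L) * (T (j : ZMod L) (i : ZMod L))⁻¹ = φ := by
  have hL0 : 0 < L := NeZero.pos L
  have hφ0 : (1 : F) - φ ≠ 0 := sub_ne_zero.mpr (Ne.symm hφ)
  set c : F := (1 - φ)⁻¹ with hc
  have hc0 : c ≠ 0 := inv_ne_zero hφ0
  -- shift lemma for range products
  have hshift : ∀ (m n : ℕ) (b : ZMod L),
      (∏ t ∈ Finset.range (m + n), g (b + (t : ZMod L))) =
      (∏ t ∈ Finset.range m, g (b + (t : ZMod L))) *
        ∏ t ∈ Finset.range n, g (b + (m : ZMod L) + (t : ZMod L)) := by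
    intro m n b
    rw [Finset.prod_range_add]
    congr 1
    refine Finset.prod_congr rfl fun t _ => ?_
    push_cast
    ring_nf
  -- rotation lemma
  have hrot : ∀ b : ZMod L, (∏ t ∈ Finset.range L, g (b + (t : ZMod L))) = φ := by
    intro b
    rw [hφdef]
    refine Finset.prod_nbij' (fun t => b + (t : ZMod L)) (fun u => (u - b).val)
      (fun _ _ => Finset.mem_univ _) (fun u _ => Finset.mem_range.mpr (ZMod.val_lt _))
      ?_ ?_ ?_
    · intro t ht
      simp only [Finset.mem_range] at ht
      show (b + (t : ZMod L) - b).val = t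
      rw [add_sub_cancel_left, ZMod.val_natCast, Nat.mod_eq_of_lt ht]
    · intro u _
      simp [ZMod.natCast_val, ZMod.cast_id]
    · intro t _; rfl
  -- the explicit inverse
  set S : Matrix (ZMod L) (ZMod L) F :=
    fun a b => (∏ t ∈ Finset.range ((a - b).val), g (b + (t : ZMod L))) * c with hS
  have hSapp : ∀ a b : ZMod L, S a b = (∏ t ∈ Finset.range ((a - b).val), g (b + (t : ZMod L))) * c := fun a b => rfl
  have hval_cast : ∀ x : ZMod L, ((x.val : ZMod L)) = x := by
    intro x; simp [ZMod.natCast_val, ZMod.cast_id]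
  -- val decrement lemma
  have hdec : ∀ a b : ZMod L, a ≠ b → (a - b).val = ((a - 1) - b).val + 1 := by
    intro a b hab
    have hx : a - b ≠ 0 := sub_ne_zero.mpr hab
    have h1 : 1 ≤ (a - b).val := Nat.one_le_iff_ne_zero.mpr (by
      simpa [ZMod.val_eq_zero] using hx)
    have he : a - 1 - b = (((a - b).val - 1 : ℕ) : ZMod L) := by
      have : ((((a - b).val - 1 : ℕ)) : ZMod L) = ((a - b).val : ZMod L) - 1 := by
        push_cast [Nat.cast_sub h1]; ring
      rw [this, hval_cast]; ring
    rw [he, ZMod.val_natCast, Nat.mod_eq_of_lt (by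
      have := ZMod.val_lt (a - b); omega)]
    omega
  have hinv : (1 - G) * S = 1 := by
    ext a b
    have hmul : ((1 - G) * S) a b = S a b - g (a - 1) * S (a - 1) b := by
      rw [Matrix.mul_apply]
      have : ∀ x : ZMod L, ((1 : Matrix (ZMod L) (ZMod L) F) - G) a x * S x b
          = (if a = x then S x b else 0) - (if x = a - 1 then g (a-1) * S (a-1) b else 0) := by
        intro x
        rw [Matrix.sub_apply, Matrix.one_apply, hG, sub_mul]
        congr 1
        · split <;> simp
        · by_cases hx : x = a - 1
          · subst hx
            simp [sub_add_cancel]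
          · have : a ≠ x + 1 := by
              intro h; exact hx (by rw [h]; ring)
            simp [this, hx]
      rw [Finset.sum_congr rfl fun x _ => this x, Finset.sum_sub_distrib,
        Finset.sum_ite_eq, Finset.sum_ite_eq']
      simp
    rw [hmul]
    by_cases hab : a = b
    · subst hab
      have h0 : (a - a).val = 0 := by simp
      have hv : ((a - 1) - a).val = L - 1 := by
        have : (a - 1) - a = (((L - 1 : ℕ)) : ZMod L) := by
          push_cast [Nat.cast_sub (by omega : 1 ≤ L), ZMod.natCast_self]; ring
        rw [this, ZMod.val_natCast, Nat.mod_eq_of_lt (by omega)]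
      have key : g (a - 1) * (∏ t ∈ Finset.range (L - 1), g (a + (t : ZMod L))) = φ := by
        have hLs : L - 1 + 1 = L := by omega
        have this : (∏ t ∈ Finset.range ((L - 1) + 1), g (a + (t : ZMod L))) = φ := by
          rw [hLs]; exact hrot a
        rw [Finset.prod_range_succ] at this
        have hcast : a + ((L - 1 : ℕ) : ZMod L) = a - 1 := by
          push_cast [Nat.cast_sub (by omega : 1 ≤ L), ZMod.natCast_self]; ring
        rw [hcast] at this
        rw [mul_comm]; exact this
      simp only [hSapp, h0, hv, Matrix.one_apply_eq, Finset.range_zero, Finset.prod_empty, one_mul]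
      rw [← mul_assoc, key, hc]
      field_simp
    · have hv := hdec a b hab
      have hcast : b + ((((a - 1) - b).val : ℕ) : ZMod L) = a - 1 := by
        rw [hval_cast]; ring
      simp only [hSapp, hv, Finset.prod_range_succ, hcast, Matrix.one_apply_ne hab]
      ring
  have hTS : T = S := by rw [hT, Matrix.inv_eq_right_inv hinv]
  -- val computations
  have hvk : ((k : ZMod L) - 1).val = k - 1 := by
    have : ((k : ZMod L)) - 1 = (((k - 1 : ℕ)) : ZMod L) := by
      push_cast [Nat.cast_sub hk]; ring
    rw [this, ZMod.val_natCast, Nat.mod_eq_of_lt (by omega)]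
  have hvj : ((j : ZMod L) - 1).val = j - 1 := by
    have : ((j : ZMod L)) - 1 = (((j - 1 : ℕ)) : ZMod L) := by
      push_cast [Nat.cast_sub (by omega : 1 ≤ j)]; ring
    rw [this, ZMod.val_natCast, Nat.mod_eq_of_lt (by omega)]
  have hvki : ((k : ZMod L) - (i : ZMod L)).val = k + L - i := by
    have : ((k : ZMod L)) - (i : ZMod L) = (((k + L - i : ℕ)) : ZMod L) := by
      push_cast [Nat.cast_sub (by omega : i ≤ k + L), ZMod.natCast_self]; ring
    rw [this, ZMod.val_natCast, Nat.mod_eq_of_lt (by omega)]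
  have hvji : ((j : ZMod L) - (i : ZMod L)).val = j - i := by
    have : ((j : ZMod L)) - (i : ZMod L) = (((j - i : ℕ)) : ZMod L) := by
      push_cast [Nat.cast_sub hij]; ring
    rw [this, ZMod.val_natCast, Nat.mod_eq_of_lt (by omega)]
  set A : F := ∏ t ∈ Finset.range (j - 1), g (1 + (t : ZMod L)) with hA
  set B : F := ∏ t ∈ Finset.range (k - 1), g (1 + (t : ZMod L)) with hB
  set C : F := ∏ t ∈ Finset.range (k + L - i), g ((i : ZMod L) + (t : ZMod L)) with hC
  set D : F := ∏ t ∈ Finset.range (j - i), g ((i : ZMod L) + (t : ZMod L)) with hD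
  have hTk1 : T (k : ZMod L) (1 : ZMod L) = B * c := by rw [hTS]; simp only [hSapp, hvk, hB]
  have hTj1 : T (j : ZMod L) (1 : ZMod L) = A * c := by rw [hTS]; simp only [hSapp, hvj, hA]
  have hTki : T (k : ZMod L) (i : ZMod L) = C * c := by rw [hTS]; simp only [hSapp, hvki, hC]
  have hTji : T (j : ZMod L) (i : ZMod L) = D * c := by rw [hTS]; simp only [hSapp, hvji, hD]
  have hB0 : B ≠ 0 := Finset.prod_ne_zero_iff.mpr fun _ _ => hg _
  have hD0 : D ≠ 0 := Finset.prod_ne_zero_iff.mpr fun _ _ => hg _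
  -- product identity
  have hcast1k : (1 : ZMod L) + ((k - 1 : ℕ) : ZMod L) = (k : ZMod L) := by
    push_cast [Nat.cast_sub hk]; ring
  have hcastki : ((k : ZMod L)) + ((i - k : ℕ) : ZMod L) = (i : ZMod L) := by
    push_cast [Nat.cast_sub hki.le]; ring
  have hAsplit : A = B * ∏ t ∈ Finset.range (j - k), g ((k : ZMod L) + (t : ZMod L)) := by
    rw [hA, hB, show j - 1 = (k - 1) + (j - k) by omega, hshift, hcast1k]
  have hEsplit : (∏ t ∈ Finset.range (j - k), g ((k : ZMod L) + (t : ZMod L)))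
      = (∏ t ∈ Finset.range (i - k), g ((k : ZMod L) + (t : ZMod L))) * D := by
    rw [show j - k = (i - k) + (j - i) by omega, hshift, hcastki, hD]
  have hE1C : (∏ t ∈ Finset.range (i - k), g ((k : ZMod L) + (t : ZMod L))) * C = φ := by
    rw [hC, ← hcastki, ← hshift, show (i - k) + (k + L - i) = L by omega, hrot]
  have hkey : A * C = φ * (B * D) := by
    rw [hAsplit, hEsplit]
    calc B * ((∏ t ∈ Finset.range (i - k), g ((k : ZMod L) + (t : ZMod L))) * D) * C
        = ((∏ t ∈ Finset.range (i - k), g ((k : ZMod L) + (t : ZMod L))) * C) * (B * D) := by ring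
      _ = φ * (B * D) := by rw [hE1C]
  refine ⟨by rw [hTk1]; exact mul_ne_zero hB0 hc0, by rw [hTji]; exact mul_ne_zero hD0 hc0, ?_⟩
  rw [hTk1, hTj1, hTki, hTji]
  field_simp
  linear_combination hkey
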